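/- arXiv:1210.6921 — 4 statements merged into one kernel-verified Lean document; each statement's English description precedes it below -/
import Mathlib

section
/- Let V be a finite-dimensional real vector space and let S₁, S₂ be finite subsets of V. Let C₁ and C₂ be the cones consisting of all finite nonnegative real linear combinations of elements of S₁ and of S₂ respectively. If C₁ ∩ C₂ = {0} and neither C₁ nor C₂ contains a line (that is, for i = 1,2, x ∈ Cᵢ and −x ∈ Cᵢ imply x = 0), then there exists a linear functional f : V → ℝ such that f(x) > 0 for every nonzero x ∈ C₁ and f(x) < 0 for every nonzero x ∈ C₂. -/
open scoped BigOperators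

variable {V : Type*} [AddCommGroup V] [Module ℝ V]

/-- The set of finite nonnegative real linear combinations of elements of `S`. -/
def coneR (S : Set V) : Set V :=
  {x | ∃ (n : ℕ) (c : Fin n → ℝ) (v : Fin n → V),
    (∀ i, 0 ≤ c i) ∧ (∀ i, v i ∈ S) ∧ x = ∑ i, c i • v i}

lemma coneR_mono {S T : Set V} (h : S ⊆ T) : coneR S ⊆ coneR T := by
  rintro x ⟨n, c, v, hc, hv, rfl⟩
  exact ⟨n, c, v, hc, fun i => h (hv i), rfl⟩

lemma sum_mem_coneR {ι : Type*} {S : Set V} (s : Finset ι) (c : ι → ℝ) (v : ι → V)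
    (hc : ∀ i ∈ s, 0 ≤ c i) (hv : ∀ i ∈ s, v i ∈ S) :
    (∑ i ∈ s, c i • v i) ∈ coneR S := by
  refine ⟨s.card, fun j => c (s.equivFin.symm j), fun j => v (s.equivFin.symm j), ?_, ?_, ?_⟩
  · intro j; exact hc _ (s.equivFin.symm j).2
  · intro j; exact hv _ (s.equivFin.symm j).2
  · calc ∑ i ∈ s, c i • v i = ∑ a : s, c (a : ι) • v (a : ι) := (Finset.sum_coe_sort s _).symm
      _ = ∑ j : Fin s.card, c (s.equivFin.symm j : ι) • v (s.equivFin.symm j : ι) :=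
        (Equiv.sum_comp s.equivFin.symm fun a => c (a : ι) • v (a : ι)).symm

lemma add_mem_coneR {S : Set V} {x y : V} (hx : x ∈ coneR S) (hy : y ∈ coneR S) :
    x + y ∈ coneR S := by
  obtain ⟨n, c, v, hc, hv, rfl⟩ := hx
  obtain ⟨m, d, w, hd, hw, rfl⟩ := hy
  have := sum_mem_coneR (S := S) (Finset.univ : Finset (Fin n ⊕ Fin m))
    (Sum.elim c d) (Sum.elim v w) ?_ ?_
  · simpa [Fintype.sum_sum_type] using this
  · rintro (i | i) - <;> [exact hc i; exact hd i]
  · rintro (i | i) - <;> [exact hv i; exact hw i]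

lemma neg_mem_coneR_neg {S : Set V} {x : V} (hx : x ∈ coneR S) : -x ∈ coneR (-S) := by
  obtain ⟨n, c, v, hc, hv, rfl⟩ := hx
  refine ⟨n, c, fun i => -(v i), hc, fun i => by simpa using hv i, ?_⟩
  simp [Finset.sum_neg_distrib]

lemma coneR_union_split {A B : Set V} {x : V} (hx : x ∈ coneR (A ∪ B)) :
    ∃ a ∈ coneR A, ∃ b ∈ coneR B, x = a + b := by
  classical
  obtain ⟨n, c, v, hc, hv, rfl⟩ := hx
  refine ⟨∑ i ∈ Finset.univ.filter (fun i => v i ∈ A), c i • v i, ?_,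
    ∑ i ∈ Finset.univ.filter (fun i => ¬ v i ∈ A), c i • v i, ?_, ?_⟩
  · exact sum_mem_coneR _ _ _ (fun i _ => hc i)
      (fun i hi => (Finset.mem_filter.mp hi).2)
  · refine sum_mem_coneR _ _ _ (fun i _ => hc i) (fun i hi => ?_)
    rcases hv i with h | h
    · exact absurd h (Finset.mem_filter.mp hi).2
    · exact h
  · exact (Finset.sum_filter_add_sum_filter_not _ _ _).symm

lemma coneR_map {W : Type*} [AddCommGroup W] [Module ℝ W] (f : V →ₗ[ℝ] W) {S : Set V} {x : V}
    (hx : x ∈ coneR S) : f x ∈ coneR (f '' S) := by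
  obtain ⟨n, c, v, hc, hv, rfl⟩ := hx
  exact ⟨n, c, fun i => f (v i), hc, fun i => ⟨v i, hv i, rfl⟩, by simp⟩

lemma coneR_pos {S : Set V} (f : V →ₗ[ℝ] ℝ) (hf : ∀ v ∈ S, v ≠ 0 → 0 < f v)
    {x : V} (hx : x ∈ coneR S) (hx0 : x ≠ 0) : 0 < f x := by
  obtain ⟨n, c, v, hc, hv, rfl⟩ := hx
  have hterm : ∀ i, 0 ≤ c i * f (v i) := by
    intro i
    rcases eq_or_ne (v i) 0 with h | h
    · simp [h]
    · exact mul_nonneg (hc i) (hf _ (hv i) h).le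
  have hfx : f (∑ i, c i • v i) = ∑ i, c i * f (v i) := by
    simp [map_sum, smul_eq_mul]
  rw [hfx]
  rcases (Finset.sum_nonneg fun i _ => hterm i).eq_or_lt with h | h
  · exfalso
    apply hx0
    have hzero : ∀ i ∈ Finset.univ, c i * f (v i) = 0 :=
      (Finset.sum_eq_zero_iff_of_nonneg fun i _ => hterm i).mp h.symm
    refine Finset.sum_eq_zero fun i _ => ?_
    rcases eq_or_ne (v i) 0 with h' | h'
    · simp [h']
    · have hci : c i = 0 := by
        rcases mul_eq_zero.mp (hzero i (Finset.mem_univ i)) with h'' | h''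
        · exact h''
        · exact absurd h'' (hf _ (hv i) h').ne'
      simp [hci]
  · exact h

lemma exists_pos_functional {W : Type*} [NormedAddCommGroup W] [NormedSpace ℝ W]
    {T : Set W} (hT : T.Finite) (h0 : (0 : W) ∉ convexHull ℝ T) :
    ∃ g : W →ₗ[ℝ] ℝ, ∀ v ∈ T, 0 < g v := by
  obtain ⟨f, u, hfu, hux⟩ := geometric_hahn_banach_closed_point
    (convex_convexHull ℝ T) (hT.isCompact_convexHull ℝ).isClosed h0
  refine ⟨-f.toLinearMap, fun v hv => ?_⟩
  have h1 : f v < u := hfu v (subset_convexHull ℝ T hv)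
  have h2 : u < f 0 := hux
  simp only [map_zero] at h2
  simp only [LinearMap.neg_apply, ContinuousLinearMap.coe_coe]
  linarith

/-- Two finitely generated cones in a finite-dimensional real vector space meeting only at the
origin and containing no line can be strictly separated by a hyperplane through the origin. -/
theorem stmt0 [FiniteDimensional ℝ V] (S₁ S₂ : Set V) (h₁ : S₁.Finite) (h₂ : S₂.Finite)
    (hmeet : coneR S₁ ∩ coneR S₂ = {0})
    (hsal₁ : ∀ x ∈ coneR S₁, -x ∈ coneR S₁ → x = 0)
    (hsal₂ : ∀ x ∈ coneR S₂, -x ∈ coneR S₂ → x = 0) :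
    ∃ f : V →ₗ[ℝ] ℝ,
      (∀ x ∈ coneR S₁, x ≠ 0 → 0 < f x) ∧ (∀ x ∈ coneR S₂, x ≠ 0 → f x < 0) := by
  classical
  set S : Set V := S₁ ∪ (-S₂) with hS
  have h₂n : (-S₂).Finite := by
    rw [← Set.image_neg_eq_neg]; exact h₂.image _
  have hSfin : S.Finite := h₁.union h₂n
  -- the cone on S is salient
  have hsal : ∀ x ∈ coneR S, -x ∈ coneR S → x = 0 := by
    intro x hx hnx
    obtain ⟨a₁, ha₁, b₁, hb₁, hx₁⟩ := coneR_union_split hx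
    obtain ⟨a₂, ha₂, b₂, hb₂, hx₂⟩ := coneR_union_split hnx
    have hb₁' : -b₁ ∈ coneR S₂ := by
      have := neg_mem_coneR_neg hb₁; rwa [neg_neg] at this
    have hb₂' : -b₂ ∈ coneR S₂ := by
      have := neg_mem_coneR_neg hb₂; rwa [neg_neg] at this
    have hsum : a₁ + a₂ = -b₁ + -b₂ := by
      have h0 : (a₁ + b₁) + (a₂ + b₂) = 0 := by rw [← hx₁, ← hx₂]; abel
      have := congrArg (· + (-b₁ + -b₂)) h0
      simpa [add_assoc, add_comm, add_left_comm] using this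
    have hmem : a₁ + a₂ ∈ coneR S₁ ∩ coneR S₂ := by
      refine ⟨add_mem_coneR ha₁ ha₂, ?_⟩
      rw [hsum]; exact add_mem_coneR hb₁' hb₂'
    have haa : a₁ + a₂ = 0 := by
      have := hmeet ▸ hmem; simpa using this
    have ha1 : a₁ = 0 := by
      apply hsal₁ a₁ ha₁
      have : -a₁ = a₂ := neg_eq_iff_add_eq_zero.mpr haa
      rw [this]; exact ha₂
    have ha2 : a₂ = 0 := by rw [ha1, zero_add] at haa; exact haa
    have hbb : -b₁ + -b₂ = 0 := by rw [← hsum, haa]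
    have hb1 : -b₁ = 0 := by
      apply hsal₂ _ hb₁'
      have : -(-b₁) = -b₂ := neg_eq_iff_add_eq_zero.mpr hbb
      rw [this]; exact hb₂'
    have hb1' : b₁ = 0 := by simpa using hb1
    rw [hx₁, ha1, hb1', add_zero]
  -- move to a normed space
  set d := Module.finrank ℝ V
  set e : V ≃ₗ[ℝ] (Fin d → ℝ) := (Module.finBasis ℝ V).equivFun with he
  set T : Set (Fin d → ℝ) := (⇑e '' S) \ {0} with hT
  have hTfin : T.Finite := (hSfin.image _).subset Set.diff_subset
  have himg : ⇑(e.symm : (Fin d → ℝ) →ₗ[ℝ] V) '' (⇑e '' S) = S := by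
    rw [Set.image_image]; simp
  have hsalT : ∀ x ∈ coneR T, -x ∈ coneR T → x = 0 := by
    intro x hx hnx
    have hx' : e.symm x ∈ coneR S := by
      have := coneR_map (e.symm : (Fin d → ℝ) →ₗ[ℝ] V)
        (coneR_mono (Set.diff_subset) hx)
      rwa [himg] at this
    have hnx' : -(e.symm x) ∈ coneR S := by
      have := coneR_map (e.symm : (Fin d → ℝ) →ₗ[ℝ] V)
        (coneR_mono (Set.diff_subset) hnx)
      rw [himg] at this
      simpa using this
    have := hsal _ hx' hnx'
    have : x = e (e.symm x) := (e.apply_symm_apply x).symm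
    rw [this, hsal _ hx' hnx', map_zero]
  -- 0 is not in the convex hull of T
  have h0 : (0 : Fin d → ℝ) ∉ convexHull ℝ T := by
    intro hmem
    obtain ⟨ι, _, w, z, hw0, hw1, hz, hzsum⟩ := mem_convexHull_iff_exists_fintype.mp hmem
    obtain ⟨i₀, hi₀⟩ : ∃ i, 0 < w i := by
      by_contra h
      push_neg at h
      have : ∑ i, w i = 0 := Finset.sum_eq_zero fun i _ => le_antisymm (h i) (hw0 i)
      rw [hw1] at this; norm_num at this
    have hxmem : w i₀ • z i₀ ∈ coneR T := by
      have := sum_mem_coneR (S := T) ({i₀} : Finset ι) w z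
        (fun i _ => hw0 i) (fun i _ => hz i)
      simpa using this
    have hnxmem : -(w i₀ • z i₀) ∈ coneR T := by
      have hsplit := Finset.add_sum_erase Finset.univ (fun i => w i • z i)
        (Finset.mem_univ i₀)
      rw [hzsum] at hsplit
      have h2 : -(w i₀ • z i₀) = ∑ i ∈ Finset.univ.erase i₀, w i • z i :=
        neg_eq_of_add_eq_zero_right hsplit
      rw [h2]
      exact sum_mem_coneR _ _ _ (fun i _ => hw0 i) (fun i _ => hz i)
    have hz0 : z i₀ = (0 : Fin d → ℝ) := by
      have := hsalT _ hxmem hnxmem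
      rcases smul_eq_zero.mp this with h | h
      · exact absurd h hi₀.ne'
      · exact h
    exact (hz i₀).2 (by simpa using hz0)
  obtain ⟨g, hg⟩ := exists_pos_functional hTfin h0
  refine ⟨g ∘ₗ (e : V →ₗ[ℝ] (Fin d → ℝ)), ?_, ?_⟩
  · intro x hx hx0
    have hx' : x ∈ coneR S := coneR_mono Set.subset_union_left hx
    refine coneR_pos _ (fun v hv hv0 => ?_) hx' hx0
    have hev : e v ∈ T := ⟨⟨v, hv, rfl⟩, by simp [hv0]⟩
    simpa using hg _ hev
  · intro x hx hx0
    have hnx : -x ∈ coneR (-S₂) := neg_mem_coneR_neg hx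
    have hnx' : -x ∈ coneR S := coneR_mono Set.subset_union_right hnx
    have hx0' : -x ≠ 0 := by simpa using hx0
    have := coneR_pos (g ∘ₗ (e : V →ₗ[ℝ] (Fin d → ℝ))) (fun v hv hv0 => ?_) hnx' hx0'
    · simp only [LinearMap.coe_comp, Function.comp_apply, map_neg] at this ⊢
      linarith
    · have hev : e v ∈ T := ⟨⟨v, hv, rfl⟩, by simp [hv0]⟩
      simpa using hg _ hev
end

section
/- Let V be a finite-dimensional real vector space, let Γ ⊆ V be a set of vectors with 0 ∉ Γ, and let c : V → ℂ be a charge for Γ. Then the total preorder ⪰_c on Γ, defined by α ⪰_c β iff arg(c(α)) ≥ arg(c(β)), is a convex preorder. -/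
open scoped BigOperators

variable {V : Type*} [AddCommGroup V] [Module ℝ V]

/-- The set of finite nonnegative integer linear combinations of elements of `S`. -/
def coneZ (S : Set V) : Set V :=
  {x | ∃ (n : ℕ) (c : Fin n → ℕ) (v : Fin n → V),
    (∀ i, v i ∈ S) ∧ x = ∑ i, (c i : ℝ) • v i}

/-- The strict part of a relation `le`. -/
def sLT (le : V → V → Prop) (a b : V) : Prop := le a b ∧ ¬ le b a

/-- The equivalence class of `α` inside `Γ` for the preorder `le`. -/
def eqCls (Γ : Set V) (le : V → V → Prop) (α : V) : Set V :=
  {β | β ∈ Γ ∧ le α β ∧ le β α}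

/-- `le` is a total preorder on `Γ`. -/
structure IsTotalPreorderOn (Γ : Set V) (le : V → V → Prop) : Prop where
  refl : ∀ a ∈ Γ, le a a
  trans : ∀ a ∈ Γ, ∀ b ∈ Γ, ∀ c ∈ Γ, le a b → le b c → le a c
  total : ∀ a ∈ Γ, ∀ b ∈ Γ, le a b ∨ le b a

/-- `le` is a convex total preorder on `Γ` (Definition 1.5 of the paper). -/
def IsConvexPreorder (Γ : Set V) (le : V → V → Prop) : Prop :=
  IsTotalPreorderOn Γ le ∧
  ∀ α ∈ Γ,
    (∀ a ∈ coneR (eqCls Γ le α), ∀ x ∈ coneZ {β | β ∈ Γ ∧ sLT le α β}, x ≠ 0 →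
        a + x ∉ coneZ {β | β ∈ Γ ∧ le β α}) ∧
    (∀ a ∈ coneR (eqCls Γ le α), ∀ x ∈ coneZ {β | β ∈ Γ ∧ sLT le β α}, x ≠ 0 →
        a + x ∉ coneZ {β | β ∈ Γ ∧ le α β})

/-- `le` is a convex total order on `Γ`: a convex total preorder that is antisymmetric on `Γ`. -/
def IsConvexOrder (Γ : Set V) (le : V → V → Prop) : Prop :=
  IsConvexPreorder Γ le ∧ ∀ a ∈ Γ, ∀ b ∈ Γ, le a b → le b a → a = b

/- ### Auxiliary lemmas -/

lemma arg_pos_of_im_pos {z : ℂ} (h : 0 < z.im) : 0 < z.arg := by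
  rcases lt_or_eq_of_le (Complex.arg_nonneg_iff.2 h.le) with h1 | h1
  · exact h1
  · exfalso; have := Complex.arg_eq_zero_iff.1 h1.symm; linarith [this.2]

lemma arg_lt_pi_of_im_pos {z : ℂ} (h : 0 < z.im) : z.arg < Real.pi :=
  Complex.arg_lt_pi_iff.2 (Or.inr (ne_of_gt h))

lemma conj_mul_im_eq (z w : ℂ) (hz : z ≠ 0) (hw : w ≠ 0) :
    ((starRingEnd ℂ) z * w).im = ‖z‖ * ‖w‖ * Real.sin (w.arg - z.arg) := by
  rw [Real.sin_sub, Complex.sin_arg, Complex.sin_arg, Complex.cos_arg hz, Complex.cos_arg hw]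
  have h1 : ‖z‖ ≠ 0 := norm_ne_zero_iff.mpr hz
  have h2 : ‖w‖ ≠ 0 := norm_ne_zero_iff.mpr hw
  simp only [Complex.mul_im, Complex.conj_re, Complex.conj_im]
  field_simp
  ring

lemma ne_zero_of_im_pos {z : ℂ} (h : 0 < z.im) : z ≠ 0 := by
  intro h'; rw [h'] at h; simp at h

/-- The sign lemma: for `z, w` in the upper half plane, the sign of `Im(conj z * w)`
matches the comparison of arguments. -/
lemma conj_mul_im_pos {z w : ℂ} (hz : 0 < z.im) (hw : 0 < w.im) (h : z.arg < w.arg) :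
    0 < ((starRingEnd ℂ) z * w).im := by
  rw [conj_mul_im_eq z w (ne_zero_of_im_pos hz) (ne_zero_of_im_pos hw)]
  have h1 : 0 < ‖z‖ := norm_pos_iff.mpr (ne_zero_of_im_pos hz)
  have h2 : 0 < ‖w‖ := norm_pos_iff.mpr (ne_zero_of_im_pos hw)
  have h3 : 0 < Real.sin (w.arg - z.arg) := by
    apply Real.sin_pos_of_pos_of_lt_pi
    · linarith
    · have := arg_lt_pi_of_im_pos hw
      have := arg_pos_of_im_pos hz
      linarith
  positivity

lemma conj_mul_im_nonpos {z w : ℂ} (hz : 0 < z.im) (hw : 0 < w.im) (h : w.arg ≤ z.arg) :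
    ((starRingEnd ℂ) z * w).im ≤ 0 := by
  rw [conj_mul_im_eq z w (ne_zero_of_im_pos hz) (ne_zero_of_im_pos hw)]
  have h1 : 0 < ‖z‖ := norm_pos_iff.mpr (ne_zero_of_im_pos hz)
  have h2 : 0 < ‖w‖ := norm_pos_iff.mpr (ne_zero_of_im_pos hw)
  have h3 : Real.sin (w.arg - z.arg) ≤ 0 := by
    apply Real.sin_nonpos_of_nonpos_of_neg_pi_le
    · linarith
    · have := arg_lt_pi_of_im_pos hz
      have := arg_pos_of_im_pos hw
      linarith
  exact mul_nonpos_of_nonneg_of_nonpos (by positivity) h3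

lemma coneR_eval_zero (f : V →ₗ[ℝ] ℝ) {S : Set V} {a : V} (ha : a ∈ coneR S)
    (h : ∀ v ∈ S, f v = 0) : f a = 0 := by
  obtain ⟨n, co, v, hco, hv, rfl⟩ := ha
  rw [map_sum]
  apply Finset.sum_eq_zero
  intro i _
  rw [map_smul, h (v i) (hv i), smul_zero]

lemma coneZ_eval_nonpos (f : V →ₗ[ℝ] ℝ) {S : Set V} {x : V} (hx : x ∈ coneZ S)
    (h : ∀ v ∈ S, f v ≤ 0) : f x ≤ 0 := by
  obtain ⟨n, co, v, hv, rfl⟩ := hx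
  rw [map_sum]
  apply Finset.sum_nonpos
  intro i _
  rw [map_smul, smul_eq_mul]
  exact mul_nonpos_of_nonneg_of_nonpos (by positivity) (h (v i) (hv i))

lemma coneZ_eval_pos (f : V →ₗ[ℝ] ℝ) {S : Set V} {x : V} (hx : x ∈ coneZ S) (hx0 : x ≠ 0)
    (h : ∀ v ∈ S, 0 < f v) : 0 < f x := by
  obtain ⟨n, co, v, hv, rfl⟩ := hx
  rw [map_sum]
  apply Finset.sum_pos'
  · intro i _
    rw [map_smul, smul_eq_mul]
    exact mul_nonneg (by positivity) (h (v i) (hv i)).le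
  · by_contra hcon
    push_neg at hcon
    apply hx0
    apply Finset.sum_eq_zero
    intro i _
    have hi := hcon i (Finset.mem_univ i)
    rw [map_smul, smul_eq_mul] at hi
    have : (co i : ℝ) = 0 := by
      by_contra hne
      have : (0:ℝ) < co i := lt_of_le_of_ne (by positivity) (Ne.symm hne)
      nlinarith [h (v i) (hv i)]
    rw [this, zero_smul]

/-- The preorder on `Γ` induced by a charge (comparing arguments of the complex values)
is a convex preorder. -/
theorem stmt2 [FiniteDimensional ℝ V] (Γ : Set V) (h0 : (0 : V) ∉ Γ)
    (c : V →ₗ[ℝ] ℂ) (hc : ∀ γ ∈ Γ, 0 < (c γ).im) :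
    IsConvexPreorder Γ (fun a b => (c a).arg ≤ (c b).arg) := by
  constructor
  · exact ⟨fun a _ => le_refl _, fun a _ b _ d _ hab hbd => le_trans hab hbd,
      fun a _ b _ => le_total _ _⟩
  · intro α hα
    -- the linear functional f v = Im (conj (c α) * c v)
    set f : V →ₗ[ℝ] ℝ :=
      Complex.imLm.comp ((LinearMap.mulLeft ℝ ((starRingEnd ℂ) (c α))).comp c) with hf
    have hfval : ∀ v, f v = ((starRingEnd ℂ) (c α) * c v).im := fun v => rfl
    have hαim : 0 < (c α).im := hc α hα
    have hclasszero : ∀ v ∈ eqCls Γ (fun a b => (c a).arg ≤ (c b).arg) α, f v = 0 := by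
      intro v hv
      obtain ⟨hvΓ, h1, h2⟩ := hv
      rw [hfval, conj_mul_im_eq _ _ (ne_zero_of_im_pos hαim) (ne_zero_of_im_pos (hc v hvΓ))]
      rw [le_antisymm h2 h1, sub_self, Real.sin_zero, mul_zero]
    constructor
    · intro a ha x hx hx0 habs
      have hfa : f a = 0 := coneR_eval_zero f ha hclasszero
      have hfx : 0 < f x := by
        apply coneZ_eval_pos f hx hx0
        rintro v ⟨hvΓ, hlt, hnle⟩
        exact conj_mul_im_pos hαim (hc v hvΓ) (lt_of_not_ge hnle)
      have hfax : f (a + x) ≤ 0 := by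
        apply coneZ_eval_nonpos f habs
        rintro v ⟨hvΓ, hle⟩
        exact conj_mul_im_nonpos hαim (hc v hvΓ) hle
      rw [map_add, hfa, zero_add] at hfax
      linarith
    · intro a ha x hx hx0 habs
      have hfa : f a = 0 := coneR_eval_zero f ha hclasszero
      have hfx : 0 < (-f) x := by
        apply coneZ_eval_pos (-f) hx hx0
        rintro v ⟨hvΓ, hlt, hnle⟩
        simp only [LinearMap.neg_apply, neg_pos, hfval]
        -- need f v < 0, i.e. Im(conj (c α) * c v) < 0 when arg (c v) < arg (c α)
        have := conj_mul_im_pos (hc v hvΓ) hαim (lt_of_not_ge hnle)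
        -- Im(conj (c v) * c α) > 0 ⇒ Im(conj (c α) * c v) < 0
        have hswap : ((starRingEnd ℂ) (c α) * c v).im = -(((starRingEnd ℂ) (c v)) * c α).im := by
          simp only [Complex.mul_im, Complex.conj_re, Complex.conj_im]
          ring
        rw [hswap]
        linarith
      have hfax : (-f) (a + x) ≤ 0 := by
        apply coneZ_eval_nonpos (-f) habs
        rintro v ⟨hvΓ, hle⟩
        simp only [LinearMap.neg_apply, neg_nonpos, hfval]
        -- need 0 ≤ f v when arg (c α) ≤ arg (c v)
        rcases eq_or_lt_of_le hle with heq | hlt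
        · rw [conj_mul_im_eq _ _ (ne_zero_of_im_pos hαim) (ne_zero_of_im_pos (hc v hvΓ)),
            ← heq, sub_self, Real.sin_zero, mul_zero]
        · exact (conj_mul_im_pos hαim (hc v hvΓ) hlt).le
      rw [map_add, LinearMap.neg_apply, LinearMap.neg_apply] at hfax
      rw [LinearMap.neg_apply] at hfx
      rw [hfa] at hfax
      linarith
end

section
/- Let V be a finite-dimensional real vector space and Γ ⊆ V a countable set of vectors such that no two distinct elements of Γ are parallel (if γ, γ' ∈ Γ and γ = tγ' for some t ∈ ℝ then γ = γ'), and such that Γ is contained in an open half-space {v ∈ V : ℓ(v) > 0} for some linear functional ℓ : V → ℝ. Then there exists a charge c : V → ℂ for Γ such that the arguments arg(c(γ)) for γ ∈ Γ are pairwise distinct; consequently the induced preorder ⪰_c (α ⪰_c β iff arg(c(α)) ≥ arg(c(β))) is a convex total order on Γ. -/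
open scoped BigOperators

variable {V : Type*} [AddCommGroup V] [Module ℝ V]

section Auxiliary

open MeasureTheory

lemma arg_mem_Ioo_of_im_pos {z : ℂ} (hz : 0 < z.im) : z.arg ∈ Set.Ioo 0 Real.pi := by
  have h1 : 0 ≤ z.arg := Complex.arg_nonneg_iff.2 hz.le
  constructor
  · rcases h1.lt_or_eq with h | h
    · exact h
    · exact absurd (Complex.arg_eq_zero_iff.1 h.symm).2 hz.ne'
  · rcases (Complex.arg_le_pi z).lt_or_eq with h | h
    · exact h
    · exact absurd (Complex.arg_eq_pi_iff.1 h).2 hz.ne'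

lemma cross_iff {u z : ℂ} (hu : 0 < u.im) (hz : 0 < z.im) :
    u.arg < z.arg ↔ 0 < u.re * z.im - u.im * z.re := by
  have hu0 : u ≠ 0 := fun h => by simp [h] at hu
  have hz0 : z ≠ 0 := fun h => by simp [h] at hz
  have hau : 0 < ‖u‖ := norm_pos_iff.mpr hu0
  have haz : 0 < ‖z‖ := norm_pos_iff.mpr hz0
  have key : u.re * z.im - u.im * z.re
      = ‖u‖ * ‖z‖ * Real.sin (z.arg - u.arg) := by
    rw [Real.sin_sub, Complex.sin_arg, Complex.cos_arg hu0, Complex.sin_arg,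
      Complex.cos_arg hz0]
    field_simp
  rw [key]
  obtain ⟨hu1, hu2⟩ := arg_mem_Ioo_of_im_pos hu
  obtain ⟨hz1, hz2⟩ := arg_mem_Ioo_of_im_pos hz
  constructor
  · intro h
    exact mul_pos (mul_pos hau haz)
      (Real.sin_pos_of_pos_of_lt_pi (by linarith) (by linarith))
  · intro h
    by_contra hle
    push_neg at hle
    have : Real.sin (z.arg - u.arg) ≤ 0 :=
      Real.sin_nonpos_of_nonpos_of_neg_pi_le (by linarith) (by linarith)
    nlinarith [mul_pos hau haz]

lemma cross_eq_iff {u z : ℂ} (hu : 0 < u.im) (hz : 0 < z.im) :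
    u.arg = z.arg ↔ u.re * z.im - u.im * z.re = 0 := by
  constructor
  · intro h
    have h1 := (cross_iff hu hz).not.1 (by rw [h]; exact lt_irrefl _)
    have h2 := (cross_iff hz hu).not.1 (by rw [h]; exact lt_irrefl _)
    push_neg at h1 h2
    linarith
  · intro h
    by_contra hne
    rcases lt_or_gt_of_ne hne with h' | h'
    · have := (cross_iff hu hz).1 h'; linarith
    · have := (cross_iff hz hu).1 h'; linarith

lemma exists_dual_ne_zero [FiniteDimensional ℝ V]
    {D : Set V} (hD : D.Countable) (h0 : 0 ∉ D) :
    ∃ g : V →ₗ[ℝ] ℝ, ∀ w ∈ D, g w ≠ 0 := by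
  classical
  set n := Module.finrank ℝ V with hn
  let e := (Module.finBasis ℝ V).equivFun
  let φ : V → ((Fin n → ℝ) →ₗ[ℝ] ℝ) := fun w => ∑ i, e w i • LinearMap.proj i
  have hφ : ∀ w u, φ w u = ∑ i, e w i * u i := by
    intro w u
    simp [φ, LinearMap.sum_apply]
  have := hD.to_subtype
  have hnull : volume (⋃ w : D, (LinearMap.ker (φ w) : Set (Fin n → ℝ))) = 0 := by
    refine measure_iUnion_null fun w => Measure.addHaar_submodule _ _ ?_
    intro htop
    have hw0 : (w : V) ≠ 0 := fun h => h0 (h ▸ w.2)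
    have hew : e (w : V) ≠ 0 := fun h => hw0 (by simpa using congrArg e.symm h)
    obtain ⟨j, hj⟩ := Function.ne_iff.1 hew
    have : φ w (Pi.single j 1) = 0 := by
      have : Pi.single j (1:ℝ) ∈ LinearMap.ker (φ w) := htop ▸ Submodule.mem_top
      simpa using this
    rw [hφ] at this
    simp [Pi.single_apply] at this
    exact hj this
  have hne : (⋃ w : D, (LinearMap.ker (φ w) : Set (Fin n → ℝ))) ≠ Set.univ := by
    intro h
    have := isOpen_univ.measure_ne_zero (volume : Measure (Fin n → ℝ)) Set.univ_nonempty
    rw [← h] at this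
    exact this hnull
  obtain ⟨u, hu⟩ := (Set.ne_univ_iff_exists_notMem _).1 hne
  refine ⟨(∑ i, u i • (LinearMap.proj i : (Fin n → ℝ) →ₗ[ℝ] ℝ)) ∘ₗ (e : V →ₗ[ℝ] (Fin n → ℝ)), ?_⟩
  intro w hw hzero
  apply hu
  refine Set.mem_iUnion.2 ⟨⟨w, hw⟩, ?_⟩
  have : φ w u = 0 := by
    rw [hφ]
    have : (∑ i, u i * e w i) = 0 := by simpa [LinearMap.sum_apply] using hzero
    rw [← this]
    exact Finset.sum_congr rfl fun i _ => mul_comm _ _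
  exact this

end Auxiliary

/-- Lemma 1.9: on a countable set of pairwise non-parallel vectors contained in an open
half-space, there is a charge with pairwise distinct arguments, and hence a convex total order. -/
theorem stmt3 [FiniteDimensional ℝ V] (Γ : Set V) (hΓ : Γ.Countable)
    (hpar : ∀ γ ∈ Γ, ∀ γ' ∈ Γ, ∀ t : ℝ, γ = t • γ' → γ = γ')
    (ℓ : V →ₗ[ℝ] ℝ) (hl : ∀ γ ∈ Γ, 0 < ℓ γ) :
    ∃ c : V →ₗ[ℝ] ℂ, (∀ γ ∈ Γ, 0 < (c γ).im) ∧
      (∀ γ ∈ Γ, ∀ γ' ∈ Γ, γ ≠ γ' → (c γ).arg ≠ (c γ').arg) ∧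
      IsConvexOrder Γ (fun a b => (c a).arg ≤ (c b).arg) := by
  classical
  -- the countable set of difference vectors
  set D : Set V := {w | ∃ γ ∈ Γ, ∃ γ' ∈ Γ, γ ≠ γ' ∧ w = ℓ γ' • γ - ℓ γ • γ'} with hD
  have hDc : D.Countable := by
    refine Set.Countable.mono ?_ ((hΓ.prod hΓ).image fun p => ℓ p.2 • p.1 - ℓ p.1 • p.2)
    rintro w ⟨γ, hγ, γ', hγ', _, rfl⟩
    exact ⟨(γ, γ'), ⟨hγ, hγ'⟩, rfl⟩
  have hD0 : (0 : V) ∉ D := by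
    rintro ⟨γ, hγ, γ', hγ', hne, h0⟩
    have hpos' : 0 < ℓ γ' := hl γ' hγ'
    have heq : ℓ γ' • γ = ℓ γ • γ' := by
      have := h0.symm
      rwa [sub_eq_zero] at this
    have hγeq : γ = ((ℓ γ')⁻¹ * ℓ γ) • γ' := by
      rw [mul_smul, ← heq, ← mul_smul, inv_mul_cancel₀ hpos'.ne', one_smul]
    exact hne (hpar γ hγ γ' hγ' _ hγeq)
  obtain ⟨g, hg⟩ := exists_dual_ne_zero hDc hD0
  -- the charge
  set c : V →ₗ[ℝ] ℂ :=
    { toFun := fun x => ⟨g x, ℓ x⟩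
      map_add' := fun x y => by
        apply Complex.ext <;> simp
      map_smul' := fun t x => by
        apply Complex.ext <;> simp [Complex.real_smul] } with hcdef
  have hre : ∀ x, (c x).re = g x := fun x => rfl
  have him : ∀ x, (c x).im = ℓ x := fun x => rfl
  have himpos : ∀ γ ∈ Γ, 0 < (c γ).im := fun γ hγ => by rw [him]; exact hl γ hγ
  -- cross product computation
  have hcross : ∀ γ ∈ Γ, ∀ γ' ∈ Γ,
      (c γ).re * (c γ').im - (c γ).im * (c γ').re = g (ℓ γ' • γ - ℓ γ • γ') := by
    intro γ hγ γ' hγ'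
    rw [hre, hre, him, him, map_sub, map_smul, map_smul, smul_eq_mul, smul_eq_mul]
    ring
  have hargne : ∀ γ ∈ Γ, ∀ γ' ∈ Γ, γ ≠ γ' → (c γ).arg ≠ (c γ').arg := by
    intro γ hγ γ' hγ' hne harg
    have h0 := (cross_eq_iff (himpos γ hγ) (himpos γ' hγ')).1 harg
    rw [hcross γ hγ γ' hγ'] at h0
    exact hg _ ⟨γ, hγ, γ', hγ', hne, rfl⟩ h0
  refine ⟨c, himpos, hargne, ?_, ?_⟩
  swap
  · -- antisymmetry
    intro a ha b hb h1 h2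
    by_contra hne
    exact hargne a ha b hb hne (le_antisymm h1 h2)
  constructor
  · exact ⟨fun a _ => le_refl _, fun a _ b _ d _ => le_trans, fun a _ b _ => le_total _ _⟩
  intro α hα
  set u : ℂ := c α with hu
  have hui : 0 < u.im := himpos α hα
  -- the linear functional measuring the cross product with u
  set F : ℂ →ₗ[ℝ] ℝ := u.re • Complex.imLm - u.im • Complex.reLm with hFdef
  have hF : ∀ z : ℂ, F z = u.re * z.im - u.im * z.re := fun z => by
    simp [hFdef, Complex.imLm_coe, Complex.reLm_coe]
  -- sign facts
  have hclass : ∀ v ∈ eqCls Γ (fun a b => (c a).arg ≤ (c b).arg) α, F (c v) = 0 := by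
    rintro v ⟨hvΓ, h1, h2⟩
    rw [hF]
    exact (cross_eq_iff hui (himpos v hvΓ)).1 (le_antisymm h1 h2)
  have hgt : ∀ β, β ∈ Γ → sLT (fun a b => (c a).arg ≤ (c b).arg) α β → 0 < F (c β) := by
    rintro β hβ ⟨h1, h2⟩
    rw [hF]
    exact (cross_iff hui (himpos β hβ)).1 (lt_of_le_not_ge h1 h2)
  have hlt : ∀ β, β ∈ Γ → sLT (fun a b => (c a).arg ≤ (c b).arg) β α → F (c β) < 0 := by
    rintro β hβ ⟨h1, h2⟩
    have := (cross_iff (himpos β hβ) hui).1 (lt_of_le_not_ge h1 h2)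
    rw [hF]; linarith
  have hle : ∀ β, β ∈ Γ → (c β).arg ≤ (c α).arg → F (c β) ≤ 0 := by
    intro β hβ h1
    by_contra hpos
    push_neg at hpos
    rw [hF] at hpos
    exact absurd ((cross_iff hui (himpos β hβ)).2 hpos) (not_lt.2 h1)
  have hge : ∀ β, β ∈ Γ → (c α).arg ≤ (c β).arg → 0 ≤ F (c β) := by
    intro β hβ h1
    by_contra hneg
    push_neg at hneg
    have h' : 0 < (c β).re * u.im - (c β).im * u.re := by rw [hF] at hneg; linarith
    exact absurd ((cross_iff (himpos β hβ) hui).2 h') (not_lt.2 h1)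
  -- sum computation
  have hsum : ∀ (n : ℕ) (t : Fin n → ℝ) (v : Fin n → V),
      F (c (∑ i, t i • v i)) = ∑ i, t i * F (c (v i)) := by
    intro n t v
    rw [map_sum, map_sum]
    exact Finset.sum_congr rfl fun i _ => by rw [map_smul, map_smul, smul_eq_mul]
  constructor
  · rintro a ⟨m, tc, v, htc, hv, rfl⟩ x ⟨n1, nc, β, hβ, rfl⟩ hx0 ⟨n2, mc, δ, hδ, heq⟩
    have hFa : F (c (∑ i, tc i • v i)) = 0 := by
      rw [hsum]
      exact Finset.sum_eq_zero fun i _ => by rw [hclass _ (hv i), mul_zero]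
    have hFx : 0 < F (c (∑ i, (nc i : ℝ) • β i)) := by
      rw [hsum]
      have hex : ∃ i, nc i ≠ 0 := by
        by_contra hall
        push_neg at hall
        exact hx0 (by simp [hall])
      obtain ⟨i, hi⟩ := hex
      exact Finset.sum_pos'
        (fun j _ => mul_nonneg (Nat.cast_nonneg _) (hgt _ (hβ j).1 (hβ j).2).le)
        ⟨i, Finset.mem_univ i, mul_pos (by exact_mod_cast Nat.pos_of_ne_zero hi)
          (hgt _ (hβ i).1 (hβ i).2)⟩
    have hFy : F (c (∑ j, (mc j : ℝ) • δ j)) ≤ 0 := by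
      rw [hsum]
      exact Finset.sum_nonpos fun j _ =>
        mul_nonpos_of_nonneg_of_nonpos (Nat.cast_nonneg _) (hle _ (hδ j).1 (hδ j).2)
    rw [← heq, map_add, map_add] at hFy
    linarith
  · rintro a ⟨m, tc, v, htc, hv, rfl⟩ x ⟨n1, nc, β, hβ, rfl⟩ hx0 ⟨n2, mc, δ, hδ, heq⟩
    have hFa : F (c (∑ i, tc i • v i)) = 0 := by
      rw [hsum]
      exact Finset.sum_eq_zero fun i _ => by rw [hclass _ (hv i), mul_zero]
    have hFx : F (c (∑ i, (nc i : ℝ) • β i)) < 0 := by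
      rw [hsum]
      have hex : ∃ i, nc i ≠ 0 := by
        by_contra hall
        push_neg at hall
        exact hx0 (by simp [hall])
      obtain ⟨i, hi⟩ := hex
      have hpos : 0 < ∑ j, -((nc j : ℝ) * F (c (β j))) :=
        Finset.sum_pos'
          (fun j _ => neg_nonneg.2 (mul_nonpos_of_nonneg_of_nonpos (Nat.cast_nonneg _)
            (hlt _ (hβ j).1 (hβ j).2).le))
          ⟨i, Finset.mem_univ i, neg_pos.2 (mul_neg_of_pos_of_neg
            (by exact_mod_cast Nat.pos_of_ne_zero hi) (hlt _ (hβ i).1 (hβ i).2))⟩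
      rw [Finset.sum_neg_distrib] at hpos
      linarith
    have hFy : 0 ≤ F (c (∑ j, (mc j : ℝ) • δ j)) := by
      rw [hsum]
      exact Finset.sum_nonneg fun j _ =>
        mul_nonneg (Nat.cast_nonneg _) (hge _ (hδ j).1 (hδ j).2)
    rw [← heq, map_add, map_add] at hFy
    linarith
end

section
/- Let K be a countable subfield of ℝ, let n ≥ 1, let a₀ ∈ ℂ with Im(a₀) ≠ 0, and let a₁, …, a_n ∈ ℝ be such that the real numbers Re(a₀), Im(a₀), a₁, …, a_n are linearly independent over K. For a vector v = (v₀, v₁, …, v_n) ∈ K^{n+1} set c(v) = v₀a₀ + v₁a₁ + ⋯ + v_na_n ∈ ℂ. If v, v' ∈ K^{n+1} satisfy v'₀ ≠ 0 and c(v) = p·c(v') for some p ∈ ℝ, then p ∈ K and v = p·v'; in particular v and v' are parallel. -/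
open scoped BigOperators

/-- Key claim in the proof of Lemma 1.9: if the listed real numbers are linearly independent
over a countable subfield `K` of `ℝ`, then two coefficient vectors over `K` whose charge values
have proportional complex values (with real ratio `p`) are themselves proportional with `p ∈ K`. -/
theorem stmt4 (K : Subfield ℝ) (hK : (K : Set ℝ).Countable)
    (n : ℕ) (hn : 1 ≤ n) (a₀ : ℂ) (ha₀ : a₀.im ≠ 0) (a : Fin n → ℝ)
    (hLI : ∀ (q₀ q₁ : ℝ) (q : Fin n → ℝ), q₀ ∈ K → q₁ ∈ K → (∀ i, q i ∈ K) →
      q₀ * a₀.re + q₁ * a₀.im + ∑ i, q i * a i = 0 →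
      q₀ = 0 ∧ q₁ = 0 ∧ ∀ i, q i = 0)
    (v v' : Fin (n + 1) → ℝ) (hv : ∀ i, v i ∈ K) (hv' : ∀ i, v' i ∈ K)
    (hv'0 : v' 0 ≠ 0) (p : ℝ)
    (hc : (v 0 : ℂ) * a₀ + ((∑ i : Fin n, v i.succ * a i : ℝ) : ℂ)
        = (p : ℂ) * ((v' 0 : ℂ) * a₀ + ((∑ i : Fin n, v' i.succ * a i : ℝ) : ℂ))) :
    p ∈ K ∧ v = p • v' := by
  have him := congrArg Complex.im hc
  simp [Complex.add_im, Complex.mul_im] at him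
  -- him : v 0 * a₀.im = p * (v' 0 * a₀.im)
  have h0 : v 0 = p * v' 0 := by
    have := mul_right_cancel₀ ha₀ (by linarith [him] : v 0 * a₀.im = (p * v' 0) * a₀.im)
    exact this
  have hp : p = v 0 / v' 0 := by field_simp [h0]; exact h0.symm
  have hpK : p ∈ K := hp ▸ K.div_mem (hv 0) (hv' 0)
  have hre := congrArg Complex.re hc
  simp [Complex.add_re, Complex.mul_re] at hre
  -- hre : v 0 * a₀.re + ∑ = p * (v' 0 * a₀.re + ∑)
  have hsum : (0:ℝ) * a₀.re + 0 * a₀.im +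
      ∑ i, (v i.succ - p * v' i.succ) * a i = 0 := by
    have : ∑ i, (v i.succ - p * v' i.succ) * a i
        = (∑ i : Fin n, v i.succ * a i) - p * ∑ i : Fin n, v' i.succ * a i := by
      rw [Finset.mul_sum, ← Finset.sum_sub_distrib]
      exact Finset.sum_congr rfl fun i _ => by ring
    rw [this]; rw [h0] at hre
    ring_nf at hre ⊢
    linarith
  obtain ⟨-, -, hz⟩ := hLI 0 0 _ K.zero_mem K.zero_mem
    (fun i => K.sub_mem (hv i.succ) (K.mul_mem hpK (hv' i.succ))) hsum
  refine ⟨hpK, funext fun i => ?_⟩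
  refine Fin.cases ?_ (fun j => ?_) i
  · simpa using h0
  · have := hz j
    simp [Pi.smul_apply, smul_eq_mul]
    linarith
end
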